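/- Let m ≥ 1 and M ∈ ℝ^{m×3} with rank M ≥ 2. Then the symmetric matrix ‖M‖_F²·I_3 − MᵀM is positive definite, where ‖M‖_F² = Tr(MᵀM). -/

import Mathlib

open Matrix

lemma posDef_unitary_conj {n : Type*} [Fintype n] [DecidableEq n]
    {U D : Matrix n n ℝ} (hU : U ∈ Matrix.unitaryGroup n ℝ) (hD : D.PosDef) :
    (U * D * star U).PosDef := by
  refine Matrix.PosDef.of_dotProduct_mulVec_pos (Matrix.isHermitian_mul_mul_conjTranspose U hD.1) fun x hx => ?_
  have hy : (star U) *ᵥ x ≠ 0 := by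
    intro h0
    apply hx
    have := congrArg (fun v => U *ᵥ v) h0
    simpa [Matrix.mulVec_mulVec, Matrix.mem_unitaryGroup_iff.mp hU] using this
  have key : star x ⬝ᵥ ((U * D * star U) *ᵥ x)
      = star ((star U) *ᵥ x) ⬝ᵥ (D *ᵥ ((star U) *ᵥ x)) := by
    rw [star_mulVec, Matrix.star_eq_conjTranspose, conjTranspose_conjTranspose,
      ← Matrix.dotProduct_mulVec, Matrix.mulVec_mulVec, Matrix.mulVec_mulVec]
  rw [key]
  exact hD.dotProduct_mulVec_pos hy

/-- **Positive definiteness of the Pauli dissipation matrix under the rank condition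
(Section 9).** For `M ∈ ℝ^{m×3}` with `rank M ≥ 2`, the symmetric matrix
`‖M‖_F² I₃ - Mᵀ M` is positive definite, where `‖M‖_F² = Tr(Mᵀ M)`. -/
theorem pauli_dissipation_posDef_of_rank
    {m : ℕ} (hm : 1 ≤ m) (M : Matrix (Fin m) (Fin 3) ℝ) (hrank : 2 ≤ M.rank) :
    ((Mᵀ * M).trace • (1 : Matrix (Fin 3) (Fin 3) ℝ) - Mᵀ * M).PosDef := by
  classical
  have hTS : Mᵀ = Mᴴ := by
    ext i j; simp [conjTranspose_apply]
  have hpsd : (Mᵀ * M).PosSemidef := by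
    rw [hTS]; exact posSemidef_conjTranspose_mul_self M
  have hS : (Mᵀ * M).IsHermitian := hpsd.1
  set lam := hS.eigenvalues with hlam
  have hlam_nonneg : ∀ i, 0 ≤ lam i := fun i => hpsd.eigenvalues_nonneg i
  have hcard : 2 ≤ Fintype.card {i // lam i ≠ 0} := by
    calc 2 ≤ M.rank := hrank
    _ = (Mᵀ * M).rank := (Matrix.rank_transpose_mul_self M).symm
    _ = Fintype.card {i // lam i ≠ 0} := hS.rank_eq_card_non_zero_eigs
  set U : Matrix (Fin 3) (Fin 3) ℝ := (hS.eigenvectorUnitary : Matrix (Fin 3) (Fin 3) ℝ)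
    with hUdef
  have hUmem : U ∈ Matrix.unitaryGroup (Fin 3) ℝ := hS.eigenvectorUnitary.2
  have hUU : U * star U = 1 := Matrix.mem_unitaryGroup_iff.mp hUmem
  have hUU' : star U * U = 1 := Matrix.mem_unitaryGroup_iff'.mp hUmem
  have hspec : Mᵀ * M = U * diagonal (RCLike.ofReal ∘ lam) * star U := hS.spectral_theorem
  set c := (Mᵀ * M).trace with hc
  have htr : c = ∑ i, lam i := by
    rw [hc]
    conv_lhs => rw [hspec]
    rw [Matrix.trace_mul_cycle, hUU', one_mul, Matrix.trace_diagonal]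
    simp
  have hpos : ∀ j, 0 < c - lam j := by
    intro j
    obtain ⟨a, b, hab⟩ := Fintype.exists_pair_of_one_lt_card (by omega)
      (α := {i // lam i ≠ 0})
    obtain ⟨k, hkj, hk⟩ : ∃ k, k ≠ j ∧ lam k ≠ 0 := by
      by_cases ha : (a : Fin 3) = j
      · exact ⟨b, fun h => hab (Subtype.ext (h.trans ha.symm) |>.symm ▸ rfl), b.2⟩
      · exact ⟨a, ha, a.2⟩
    rw [htr, sub_pos]
    have hsum : ∑ i, lam i = lam j + ∑ i ∈ Finset.univ.erase j, lam i := by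
      rw [← Finset.add_sum_erase _ _ (Finset.mem_univ j)]
    rw [hsum, lt_add_iff_pos_right]
    refine Finset.sum_pos' (fun i _ => hlam_nonneg i) ⟨k, Finset.mem_erase.mpr ⟨hkj,
      Finset.mem_univ k⟩, lt_of_le_of_ne (hlam_nonneg k) (Ne.symm hk)⟩
  have hkey : c • (1 : Matrix (Fin 3) (Fin 3) ℝ) - Mᵀ * M
      = U * diagonal (fun i => c - lam i) * star U := by
    have h1 : (diagonal (fun i => c - lam i) : Matrix (Fin 3) (Fin 3) ℝ)
        = c • 1 - diagonal (RCLike.ofReal ∘ lam) := by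
      rw [smul_one_eq_diagonal, ← diagonal_sub]
      congr 1
    conv_lhs => rw [hspec]
    rw [h1, Matrix.mul_sub, Matrix.sub_mul, Matrix.mul_smul, Matrix.smul_mul, mul_one, hUU]
  rw [hkey]
  exact posDef_unitary_conj hUmem (Matrix.PosDef.diagonal hpos)
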